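/- Let s ∈ (0,1) and suppose ω(α,h) ≤ C h^N |x_α|^{−N−2s} for all α ≠ 0. Then the Fourier symbol m(ξ) = −h^N Σ_{β∈ℤ^N} a(x_β)(1 − cos(ξ·x_β)) (with a(x_α) = h^{−N} ω(α,h)) satisfies −K₁|ξ|^{2s} ≤ m(ξ) for all ξ ∈ Q_h = [−π/h, π/h]^N, for some constant K₁ > 0 depending only on C, N, s. -/

import Mathlib

set_option maxHeartbeats 1000000
open Real

lemma aux_pow_sub (n : ℕ) {a b : ℝ} (hb : 0 ≤ b) (hab : b ≤ a) :
    a ^ (n + 1) - b ^ (n + 1) ≤ ((n : ℝ) + 1) * a ^ n * (a - b) := by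
  induction n with
  | zero => simp
  | succ n ih =>
    have ha : 0 ≤ a := hb.trans hab
    have hba : b ^ (n + 1) ≤ a ^ (n + 1) := pow_le_pow_left₀ hb hab _
    have : a ^ (n + 1 + 1) - b ^ (n + 1 + 1)
        ≤ ((n : ℝ) + 1 + 1) * a ^ (n + 1) * (a - b) := by
      calc a ^ (n + 1 + 1) - b ^ (n + 1 + 1)
          = a * (a ^ (n + 1) - b ^ (n + 1)) + b ^ (n + 1) * (a - b) := by ring
        _ ≤ a * (((n : ℝ) + 1) * a ^ n * (a - b)) + a ^ (n + 1) * (a - b) :=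
            add_le_add (mul_le_mul_of_nonneg_left ih ha)
              (mul_le_mul_of_nonneg_right hba (by linarith))
        _ = ((n : ℝ) + 1 + 1) * a ^ (n + 1) * (a - b) := by ring
    convert this using 2
    push_cast; ring

lemma aux_head_sum {q : ℝ} (hq0 : 0 < q) (hq1 : q < 1) (M : ℕ) (hM : 1 ≤ M) :
    ∑ i ∈ Finset.range M, ((i : ℝ) + 1) ^ (-q) ≤ (1 + 1 / (1 - q)) * (M : ℝ) ^ (1 - q) := by
  have h1q : (0:ℝ) < 1 - q := by linarith
  have hM1 : (1:ℝ) ≤ (M:ℝ) := by exact_mod_cast hM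
  have hMq : (1:ℝ) ≤ (M:ℝ) ^ (1 - q) := Real.one_le_rpow hM1 h1q.le
  have hsplit : ∑ i ∈ Finset.range M, ((i : ℝ) + 1) ^ (-q)
      = ((0:ℝ) + 1) ^ (-q) + ∑ i ∈ Finset.Ico 1 M, ((i : ℝ) + 1) ^ (-q) := by
    rw [Finset.range_eq_Ico, Finset.sum_eq_sum_Ico_succ_bot hM]
    norm_num
  have hanti : AntitoneOn (fun x : ℝ => x ^ (-q)) (Set.Icc ((1:ℕ):ℝ) ((M:ℕ):ℝ)) := by
    intro x hx y hy hxy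
    exact Real.rpow_le_rpow_of_nonpos (lt_of_lt_of_le one_pos (by exact_mod_cast hx.1)) hxy
      (by linarith)
  have hint := AntitoneOn.sum_le_integral_Ico hM hanti
  have hIval : ∫ x in ((1:ℕ):ℝ)..((M:ℕ):ℝ), (x : ℝ) ^ (-q)
      = ((M:ℝ) ^ (1 - q) - 1) / (1 - q) := by
    rw [integral_rpow (Or.inl (by linarith))]
    norm_num
    rw [show -q + 1 = 1 - q by ring]
  have hsum2 : ∑ i ∈ Finset.Ico 1 M, ((i : ℝ) + 1) ^ (-q) ≤ ((M:ℝ) ^ (1 - q) - 1) / (1 - q) := by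
    rw [← hIval]
    refine le_trans (le_of_eq ?_) hint
    apply Finset.sum_congr rfl
    intro i _
    push_cast
    ring_nf
  rw [hsplit]
  have h01 : ((0:ℝ) + 1) ^ (-q) = 1 := by norm_num
  rw [h01]
  have hle : ((M:ℝ) ^ (1 - q) - 1) / (1 - q) ≤ (M:ℝ) ^ (1 - q) / (1 - q) := by
    gcongr
    linarith
  calc 1 + ∑ i ∈ Finset.Ico 1 M, ((i : ℝ) + 1) ^ (-q)
      ≤ (M:ℝ) ^ (1 - q) + (M:ℝ) ^ (1 - q) / (1 - q) := by
        exact add_le_add hMq (hsum2.trans hle)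
    _ = (1 + 1 / (1 - q)) * (M : ℝ) ^ (1 - q) := by field_simp

lemma aux_tail_sum {p : ℝ} (hp : 1 < p) (n₀ : ℕ) (hn₀ : 1 ≤ n₀) :
    ∑' i : ℕ, ((n₀ + 1 + i : ℕ) : ℝ) ^ (-p) ≤ (n₀ : ℝ) ^ (1 - p) / (p - 1) := by
  have hp1 : (0:ℝ) < p - 1 := by linarith
  have hn₀1 : (1:ℝ) ≤ (n₀:ℝ) := by exact_mod_cast hn₀
  apply Real.tsum_le_of_sum_range_le
  · intro n; positivity
  · intro n
    have hanti : AntitoneOn (fun x : ℝ => x ^ (-p)) (Set.Icc ((n₀:ℝ)) ((n₀:ℝ) + n)) := by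
      intro x hx y hy hxy
      exact Real.rpow_le_rpow_of_nonpos (lt_of_lt_of_le one_pos (le_trans hn₀1 hx.1)) hxy
        (by linarith)
    have hint := hanti.sum_le_integral
    have hIval : ∫ x in ((n₀:ℝ))..((n₀:ℝ) + n), (x:ℝ) ^ (-p)
        = ((n₀:ℝ) ^ (1 - p) - ((n₀:ℝ) + n) ^ (1 - p)) / (p - 1) := by
      rw [integral_rpow (Or.inr ⟨by
        intro hcon
        have : p = 1 := by linarith [neg_eq_iff_eq_neg.mp hcon]
        linarith, by
        intro hmem
        rw [Set.uIcc_of_le (by simp : (n₀:ℝ) ≤ (n₀:ℝ) + n)] at hmem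
        have := hmem.1
        linarith⟩)]
      rw [show -p + 1 = 1 - p by ring]
      rw [show ((n₀:ℝ) + n) ^ (1-p) - (n₀:ℝ) ^ (1-p) = -(((n₀:ℝ)) ^ (1-p) - ((n₀:ℝ) + n) ^ (1-p)) by ring]
      rw [show (1 - p) = -(p-1) by ring]
      rw [neg_div, div_neg, neg_neg]
    have hsum : ∑ i ∈ Finset.range n, ((n₀ + 1 + i : ℕ) : ℝ) ^ (-p)
        = ∑ i ∈ Finset.range n, (fun x : ℝ => x ^ (-p)) ((n₀:ℝ) + ((i : ℕ) + 1 : ℕ)) := by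
      apply Finset.sum_congr rfl
      intro i _
      push_cast
      ring_nf
    rw [hsum]
    refine le_trans hint ?_
    rw [hIval]
    have : (0:ℝ) ≤ ((n₀:ℝ) + n) ^ (1 - p) := by positivity
    have h2 : (0:ℝ) ≤ (n₀:ℝ) ^ (1-p) := by positivity
    gcongr
    linarith

lemma aux_oneD (N : ℕ) (hN : 0 < N) {s : ℝ} (hs0 : 0 < s) (hs1 : s < 1) {t : ℝ} (ht : 0 < t) :
    Summable (fun m : ℕ => (m:ℝ) ^ (-(1+2*s)) * min ((N:ℝ)*t^2*(m:ℝ)^2/2) 2) ∧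
    ∑' m : ℕ, (m:ℝ) ^ (-(1+2*s)) * min ((N:ℝ)*t^2*(m:ℝ)^2/2) 2
      ≤ ((N:ℝ)*(1+1/(1-s))*(2:ℝ)^(2-2*s) + 2 + 2/s) * t ^ (2*s) := by
  have h1s : (0:ℝ) < 1 - s := by linarith
  have hNR : (1:ℝ) ≤ (N:ℝ) := by exact_mod_cast hN
  set b : ℕ → ℝ := fun m => (m:ℝ) ^ (-(1+2*s)) * min ((N:ℝ)*t^2*(m:ℝ)^2/2) 2 with hbdef
  have hminnn : ∀ m : ℕ, (0:ℝ) ≤ min ((N:ℝ)*t^2*(m:ℝ)^2/2) 2 :=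
    fun m => le_min (by positivity) (by norm_num)
  have hbnn : ∀ m, 0 ≤ b m := fun m =>
    mul_nonneg (Real.rpow_nonneg (Nat.cast_nonneg m) _) (hminnn m)
  have hble : ∀ m, b m ≤ 2 * (m:ℝ) ^ (-(1+2*s)) := by
    intro m
    rw [mul_comm (2:ℝ)]
    exact mul_le_mul_of_nonneg_left (min_le_right _ _)
      (Real.rpow_nonneg (Nat.cast_nonneg m) _)
  have hsum_pow : Summable (fun m : ℕ => (m:ℝ) ^ (-(1+2*s))) :=
    Real.summable_nat_rpow.mpr (by linarith)
  have hsb : Summable b := Summable.of_nonneg_of_le hbnn hble (hsum_pow.mul_left 2)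
  have hb0 : b 0 = 0 := by
    have h2s : (0:ℝ) < 1 + 2*s := by linarith
    simp only [hbdef, Nat.cast_zero]
    rw [Real.zero_rpow (neg_ne_zero.mpr h2s.ne')]
    ring
  have tailb : ∀ n₀ : ℕ, 1 ≤ n₀ → ∑' i : ℕ, b (i + (n₀+1)) ≤ (n₀:ℝ) ^ (-(2*s)) / s := by
    intro n₀ hn₀
    have hsummable₁ : Summable (fun i : ℕ => b (i + (n₀+1))) :=
      (summable_nat_add_iff (n₀+1)).2 hsb
    have hsummable₂ : Summable (fun i : ℕ => 2 * ((i + (n₀+1) : ℕ):ℝ) ^ (-(1+2*s))) :=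
      (summable_nat_add_iff (n₀+1)).2 (hsum_pow.mul_left 2)
    have h1 : ∑' i : ℕ, b (i + (n₀+1)) ≤ ∑' i : ℕ, 2 * ((i + (n₀+1) : ℕ):ℝ) ^ (-(1+2*s)) :=
      Summable.tsum_le_tsum (fun i => hble _) hsummable₁ hsummable₂
    have h2 : ∑' i : ℕ, 2 * ((i + (n₀+1) : ℕ):ℝ) ^ (-(1+2*s))
        = 2 * ∑' i : ℕ, ((n₀ + 1 + i : ℕ):ℝ) ^ (-(1+2*s)) := by
      rw [tsum_mul_left]
      congr 1
      exact tsum_congr fun i => by rw [show i + (n₀+1) = n₀+1+i from by omega]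
    have h3 := aux_tail_sum (p := 1+2*s) (by linarith) n₀ hn₀
    calc ∑' i : ℕ, b (i + (n₀+1)) ≤ 2 * ∑' i : ℕ, ((n₀ + 1 + i : ℕ):ℝ) ^ (-(1+2*s)) := by
          rw [← h2]; exact h1
      _ ≤ 2 * ((n₀:ℝ) ^ (1-(1+2*s)) / ((1+2*s)-1)) := by
          exact mul_le_mul_of_nonneg_left h3 (by norm_num)
      _ = (n₀:ℝ) ^ (-(2*s)) / s := by
          rw [show (1-(1+2*s)) = -(2*s) by ring, show (1+2*s)-1 = 2*s by ring]
          field_simp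
  refine ⟨hsb, ?_⟩
  have hE : (0:ℝ) < 1 + 1/(1-s) := by positivity
  have hKhead : (0:ℝ) ≤ (N:ℝ)*(1+1/(1-s))*(2:ℝ)^(2-2*s) := by positivity
  rcases le_or_gt 1 t with ht1 | ht1
  · -- case 1 ≤ t
    have hsplit := Summable.sum_add_tsum_nat_add 2 hsb
    have hb1 : b 1 ≤ 2 := by
      simp only [hbdef, Nat.cast_one, Real.one_rpow, one_mul]
      exact min_le_right _ _
    have htail := tailb 1 le_rfl
    have htpow : (1:ℝ) ≤ t ^ (2*s) := Real.one_le_rpow ht1 (by positivity)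
    have hsum2 : ∑ i ∈ Finset.range 2, b i = b 0 + b 1 := by
      rw [Finset.sum_range_succ, Finset.sum_range_one]
    have h1s' : (1:ℝ) ^ (-(2*s)) = 1 := Real.one_rpow _
    have : ∑' m, b m ≤ 2 + 1/s := by
      rw [← hsplit, hsum2, hb0]
      push_cast at htail
      rw [h1s'] at htail
      linarith
    have hK2 : 2 + 1/s ≤ ((N:ℝ)*(1+1/(1-s))*(2:ℝ)^(2-2*s) + 2 + 2/s) * t ^ (2*s) := by
      have h1 : 2 + 1/s ≤ (N:ℝ)*(1+1/(1-s))*(2:ℝ)^(2-2*s) + 2 + 2/s := by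
        have : 1/s ≤ 2/s := by
          gcongr
          norm_num
        linarith
      calc 2 + 1/s ≤ ((N:ℝ)*(1+1/(1-s))*(2:ℝ)^(2-2*s) + 2 + 2/s) * 1 := by linarith [h1]
        _ ≤ _ := by
            apply mul_le_mul_of_nonneg_left htpow
            positivity
    linarith
  · -- case t < 1
    set m₀ : ℕ := ⌈1/t⌉₊ with hm₀def
    have hinv1 : (1:ℝ) ≤ 1/t := by rw [le_div_iff₀ ht]; linarith
    have hm₀1 : 1 ≤ m₀ := Nat.ceil_pos.mpr (by positivity)
    have hm₀R1 : (1:ℝ) ≤ (m₀:ℝ) := by exact_mod_cast hm₀1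
    have hm₀pos : (0:ℝ) < (m₀:ℝ) := lt_of_lt_of_le one_pos hm₀R1
    have hm₀low : 1/t ≤ (m₀:ℝ) := Nat.le_ceil _
    have hm₀up : (m₀:ℝ) ≤ 2/t := by
      have h1 := Nat.ceil_lt_add_one (by positivity : (0:ℝ) ≤ 1/t)
      have h2 : 2/t = 1/t + 1/t := by ring
      rw [← hm₀def] at h1
      linarith
    have hsplit := Summable.sum_add_tsum_nat_add (m₀+1) hsb
    -- head estimate
    have hheadterm : ∀ i ∈ Finset.range m₀,
        b (i+1) ≤ ((N:ℝ)*t^2/2) * ((m₀:ℝ)^(1-s) * ((i:ℝ)+1)^(-s)) := by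
      intro i hi
      have him : i + 1 ≤ m₀ := Nat.succ_le_of_lt (Finset.mem_range.mp hi)
      have hmR : ((i+1:ℕ):ℝ) = (i:ℝ)+1 := by push_cast; ring
      set mR : ℝ := (i:ℝ)+1 with hmRdef
      have hmpos : (0:ℝ) < mR := by positivity
      have hb1 : b (i+1) ≤ mR ^ (-(1+2*s)) * ((N:ℝ)*t^2*mR^2/2) := by
        simp only [hbdef, hmR]
        exact mul_le_mul_of_nonneg_left (min_le_left _ _) (Real.rpow_nonneg hmpos.le _)
      have hb2 : mR ^ (-(1+2*s)) * mR^2 = mR ^ (1-2*s) := by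
        have h2cast : mR ^ (2:ℕ) = mR ^ ((2:ℕ):ℝ) := (Real.rpow_natCast mR 2).symm
        rw [h2cast, ← Real.rpow_add hmpos]
        congr 1
        push_cast
        ring
      have hb3 : mR ^ (1-2*s) = mR ^ (1-s) * mR ^ (-s) := by
        rw [← Real.rpow_add hmpos]
        congr 1
        ring
      have hb4 : mR ^ (1-s) ≤ (m₀:ℝ) ^ (1-s) := by
        apply Real.rpow_le_rpow hmpos.le _ (by linarith)
        rw [← hmR]
        exact_mod_cast him
      calc b (i+1) ≤ mR ^ (-(1+2*s)) * ((N:ℝ)*t^2*mR^2/2) := hb1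
        _ = ((N:ℝ)*t^2/2) * (mR ^ (-(1+2*s)) * mR^2) := by ring
        _ = ((N:ℝ)*t^2/2) * (mR ^ (1-s) * mR ^ (-s)) := by rw [hb2, hb3]
        _ ≤ ((N:ℝ)*t^2/2) * ((m₀:ℝ)^(1-s) * mR ^ (-s)) := by
            apply mul_le_mul_of_nonneg_left _ (by positivity)
            exact mul_le_mul_of_nonneg_right hb4 (Real.rpow_nonneg hmpos.le _)
    have hhead : ∑ i ∈ Finset.range m₀, b (i+1)
        ≤ ((N:ℝ)*t^2/2) * ((m₀:ℝ)^(1-s) * ((1+1/(1-s)) * (m₀:ℝ)^(1-s))) := by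
      calc ∑ i ∈ Finset.range m₀, b (i+1)
          ≤ ∑ i ∈ Finset.range m₀, ((N:ℝ)*t^2/2) * ((m₀:ℝ)^(1-s) * ((i:ℝ)+1)^(-s)) :=
            Finset.sum_le_sum hheadterm
        _ = ((N:ℝ)*t^2/2) * ((m₀:ℝ)^(1-s) * ∑ i ∈ Finset.range m₀, ((i:ℝ)+1)^(-s)) := by
            simp only [Finset.mul_sum]
        _ ≤ ((N:ℝ)*t^2/2) * ((m₀:ℝ)^(1-s) * ((1+1/(1-s)) * (m₀:ℝ)^(1-s))) := by
            apply mul_le_mul_of_nonneg_left _ (by positivity)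
            apply mul_le_mul_of_nonneg_left _ (Real.rpow_nonneg hm₀pos.le _)
            exact aux_head_sum hs0 hs1 m₀ hm₀1
    -- package head with rpow algebra
    have hmm : (m₀:ℝ)^(1-s) * ((1+1/(1-s)) * (m₀:ℝ)^(1-s))
        = (1+1/(1-s)) * (m₀:ℝ)^(2-2*s) := by
      rw [show (m₀:ℝ)^(1-s) * ((1+1/(1-s)) * (m₀:ℝ)^(1-s))
          = (1+1/(1-s)) * ((m₀:ℝ)^(1-s) * (m₀:ℝ)^(1-s)) by ring,
        ← Real.rpow_add hm₀pos]
      congr 2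
      ring
    have hm3 : (m₀:ℝ)^(2-2*s) ≤ (2/t)^(2-2*s) :=
      Real.rpow_le_rpow hm₀pos.le hm₀up (by linarith)
    have h4 : t^2 * (2/t)^(2-2*s) = (2:ℝ)^(2-2*s) * t^(2*s) := by
      rw [Real.div_rpow (by norm_num) ht.le]
      rw [show t^(2:ℕ) = t ^ ((2:ℕ):ℝ) from (Real.rpow_natCast t 2).symm]
      have ht22 : t ^ ((2:ℕ):ℝ) = t ^ (2*s) * t^(2-2*s) := by
        rw [← Real.rpow_add ht]
        congr 1
        push_cast
        ring
      have htne : t^(2-2*s) ≠ 0 := (Real.rpow_pos_of_pos ht _).ne'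
      rw [ht22]
      field_simp
    have hheadfinal : ∑ i ∈ Finset.range m₀, b (i+1)
        ≤ (N:ℝ)*(1+1/(1-s)) * ((2:ℝ)^(2-2*s) * t^(2*s)) := by
      have e1 : ((N:ℝ)*t^2/2) * ((1+1/(1-s)) * (m₀:ℝ)^(2-2*s))
          ≤ ((N:ℝ)*t^2/2) * ((1+1/(1-s)) * (2/t)^(2-2*s)) := by
        apply mul_le_mul_of_nonneg_left _ (by positivity)
        exact mul_le_mul_of_nonneg_left hm3 hE.le
      have e2 : ((N:ℝ)*t^2/2) * ((1+1/(1-s)) * (2/t)^(2-2*s))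
          = ((N:ℝ)*(1+1/(1-s))/2) * (t^2 * (2/t)^(2-2*s)) := by ring
      calc ∑ i ∈ Finset.range m₀, b (i+1)
          ≤ ((N:ℝ)*t^2/2) * ((1+1/(1-s)) * (m₀:ℝ)^(2-2*s)) := by rw [← hmm]; exact hhead
        _ ≤ ((N:ℝ)*t^2/2) * ((1+1/(1-s)) * (2/t)^(2-2*s)) := e1
        _ = ((N:ℝ)*(1+1/(1-s))/2) * (t^2 * (2/t)^(2-2*s)) := e2
        _ = ((N:ℝ)*(1+1/(1-s))/2) * ((2:ℝ)^(2-2*s) * t^(2*s)) := by rw [h4]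
        _ ≤ (N:ℝ)*(1+1/(1-s)) * ((2:ℝ)^(2-2*s) * t^(2*s)) := by
            apply mul_le_mul_of_nonneg_right _ (by positivity)
            nlinarith [hE, hNR]
    -- tail estimate
    have htail := tailb m₀ hm₀1
    have htail2 : (m₀:ℝ) ^ (-(2*s)) ≤ t ^ (2*s) := by
      have h1 : (m₀:ℝ) ^ (-(2*s)) ≤ (1/t) ^ (-(2*s)) :=
        Real.rpow_le_rpow_of_nonpos (by positivity) hm₀low (by linarith)
      have h2 : (1/t) ^ (-(2*s)) = t ^ (2*s) := by
        rw [one_div, Real.inv_rpow ht.le, Real.rpow_neg ht.le, inv_inv]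
      linarith
    have htailfinal : ∑' i : ℕ, b (i + (m₀+1)) ≤ (2 + 2/s) * t ^ (2*s) := by
      have h1 : (m₀:ℝ) ^ (-(2*s)) / s ≤ t ^ (2*s) / s := by gcongr
      have h2 : t ^ (2*s) / s ≤ (2 + 2/s) * t ^ (2*s) := by
        have htp : (0:ℝ) ≤ t ^ (2*s) := Real.rpow_nonneg ht.le _
        rw [div_eq_mul_inv, mul_comm]
        apply mul_le_mul_of_nonneg_right _ htp
        rw [← one_div]
        have : 1/s ≤ 2/s := by gcongr; norm_num
        linarith
      linarith
    -- combine
    rw [← hsplit, Finset.sum_range_succ']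
    rw [hb0]
    linarith
/-- If `ω(α,h) ≤ C hᴺ |x_α|^{-N-2s}` with `s ∈ (0,1)`, then the Fourier symbol
`m(ξ) = -Σ_{β≠0} ω(β,h)(1 - cos(ξ·x_β))` of `L_h` satisfies `-K₁|ξ|^{2s} ≤ m(ξ)` on
`Q_h = [-π/h, π/h]ᴺ`, for a constant `K₁ > 0` depending only on `C`, `N`, `s`. -/
theorem stmt8 (N : ℕ) (hN : 0 < N) (s C : ℝ) (hs : s ∈ Set.Ioo (0 : ℝ) 1) (hC : 0 < C) :
    ∃ K1 > (0 : ℝ), ∀ h : ℝ, 0 < h → ∀ ω : (Fin N → ℤ) → ℝ,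
      (∀ α, ω (-α) = ω α) → (∀ α, 0 ≤ ω α) → ω 0 = 0 →
      Summable ω → 0 < ∑' α, ω α →
      (∀ α : Fin N → ℤ, α ≠ 0 →
        ω α ≤ C * h ^ N * (Real.sqrt (∑ i, (h * α i) ^ 2)) ^ (-(N : ℝ) - 2 * s)) →
      ∀ ξ : Fin N → ℝ, (∀ i, |ξ i| ≤ π / h) →
        -K1 * (Real.sqrt (∑ i, ξ i ^ 2)) ^ (2 * s) ≤
          -∑' β : Fin N → ℤ, ω β * (1 - Real.cos (∑ i, ξ i * (h * β i))) := by
  obtain ⟨hs0, hs1⟩ := hs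
  have h1s : (0:ℝ) < 1 - s := by linarith
  have hNR : (1:ℝ) ≤ (N:ℝ) := by exact_mod_cast hN
  set D : ℝ := 2*(N:ℝ)*3^(N-1) with hDdef
  set K2 : ℝ := (N:ℝ)*(1+1/(1-s))*(2:ℝ)^(2-2*s) + 2 + 2/s with hK2def
  have hDpos : 0 < D := by positivity
  have hK2pos : 0 < K2 := by
    have hE : (0:ℝ) < 1 + 1/(1-s) := by positivity
    have h1 : (0:ℝ) < (N:ℝ)*(1+1/(1-s))*(2:ℝ)^(2-2*s) := by positivity
    have h2 : (0:ℝ) < 2/s := by positivity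
    rw [hK2def]; linarith
  refine ⟨C * D * K2, by positivity, ?_⟩
  intro h hh ω hsymm hωnn hω0 hωsum hωpos hbound ξ hξ
  set r : ℝ := Real.sqrt (∑ i, ξ i ^ 2) with hrdef
  have hrnn : 0 ≤ r := Real.sqrt_nonneg _
  by_cases hr : r = 0
  · -- degenerate case ξ = 0
    have hsum0 : ∑ i, ξ i ^ 2 = 0 := by
      have h1 : ∑ i, ξ i ^ 2 ≤ 0 := Real.sqrt_eq_zero'.mp hr
      have h2 : 0 ≤ ∑ i, ξ i ^ 2 := Finset.sum_nonneg fun i _ => sq_nonneg _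
      linarith
    have hξ0 : ∀ i, ξ i = 0 := by
      intro i
      have := (Finset.sum_eq_zero_iff_of_nonneg (fun i _ => sq_nonneg (ξ i))).mp hsum0 i
        (Finset.mem_univ i)
      exact pow_eq_zero_iff (by norm_num) |>.mp this
    have hts : ∑' β : Fin N → ℤ, ω β * (1 - Real.cos (∑ i, ξ i * (h * β i))) = 0 := by
      have hz : ∀ β : Fin N → ℤ, ω β * (1 - Real.cos (∑ i, ξ i * (h * β i))) = 0 := by
        intro β
        have hzero : ∑ i, ξ i * (h * β i) = 0 :=
          Finset.sum_eq_zero fun i _ => by rw [hξ0 i]; ring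
        rw [hzero, Real.cos_zero]
        ring
      rw [tsum_congr hz, tsum_zero]
    rw [hts, hr, Real.zero_rpow (by positivity : (0:ℝ) < 2*s).ne']
    norm_num
  · -- main case : r > 0
    have hrpos : 0 < r := lt_of_le_of_ne hrnn (Ne.symm hr)
    set t : ℝ := r * h with htdef
    have ht : 0 < t := mul_pos hrpos hh
    obtain ⟨hsb, honeD⟩ := aux_oneD N hN hs0 hs1 ht
    set b : ℕ → ℝ := fun m => (m:ℝ) ^ (-(1+2*s)) * min ((N:ℝ)*t^2*(m:ℝ)^2/2) 2 with hbdef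
    have hminnn : ∀ x : ℝ, (0:ℝ) ≤ min ((N:ℝ)*t^2*x^2/2) 2 :=
      fun x => le_min (by positivity) (by norm_num)
    have hbnn : ∀ m, 0 ≤ b m := fun m =>
      mul_nonneg (Real.rpow_nonneg (Nat.cast_nonneg m) _) (hminnn _)
    set Mf : (Fin N → ℤ) → ℕ := fun β => Finset.univ.sup fun i => (β i).natAbs with hMfdef
    set g : ℕ → ℝ := fun m => (m:ℝ) ^ (-(N:ℝ)-2*s) * min ((N:ℝ)*t^2*(m:ℝ)^2/2) 2 with hgdef
    have hgnn : ∀ m, 0 ≤ g m := fun m =>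
      mul_nonneg (Real.rpow_nonneg (Nat.cast_nonneg m) _) (hminnn _)
    have hexpne : -(N:ℝ)-2*s ≠ 0 := by
      have : (0:ℝ) < (N:ℝ) + 2*s := by linarith
      intro hcon
      have : -(N:ℝ)-2*s = -((N:ℝ)+2*s) := by ring
      linarith [hcon ▸ this]
    have hg0 : g 0 = 0 := by
      simp only [hgdef, Nat.cast_zero]
      rw [Real.zero_rpow hexpne]
      ring
    set F : (Fin N → ℤ) → ℝ := fun β => ω β * (1 - Real.cos (∑ i, ξ i * (h * β i))) with hFdef
    have hFnn : ∀ β, 0 ≤ F β := fun β =>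
      mul_nonneg (hωnn β) (by linarith [Real.cos_le_one (∑ i, ξ i * (h * β i))])
    have hFsum : Summable F := by
      apply Summable.of_nonneg_of_le hFnn (fun β => ?_) (hωsum.mul_left 2)
      calc F β ≤ ω β * 2 := by
            apply mul_le_mul_of_nonneg_left _ (hωnn β)
            linarith [Real.neg_one_le_cos (∑ i, ξ i * (h * β i))]
        _ = 2 * ω β := by ring
    -- pointwise bound
    have huniv : (Finset.univ : Finset (Fin N)).Nonempty := ⟨⟨0, hN⟩, Finset.mem_univ _⟩
    have hpoint : ∀ β, F β ≤ (C * h ^ (-(2*s))) * g (Mf β) := by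
      intro β
      by_cases hβ : β = 0
      · subst hβ
        have hM0 : Mf 0 = 0 := by
          simp [hMfdef]
        rw [hM0, hg0]
        simp only [hFdef]
        rw [hω0]
        simp
      · set z : ℝ := ∑ i, ξ i * (h * β i) with hzdef
        obtain ⟨i₀, hi₀⟩ : ∃ i, β i ≠ 0 := by
          by_contra hcon
          push_neg at hcon
          exact hβ (funext hcon)
        have hM1 : 1 ≤ Mf β :=
          le_trans (Int.natAbs_pos.mpr hi₀) (Finset.le_sup (f := fun i => (β i).natAbs) (Finset.mem_univ i₀))
        have hMR0 : (0:ℝ) < (Mf β : ℝ) := by exact_mod_cast hM1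
        set ρ : ℝ := Real.sqrt (∑ i, (h * β i) ^ 2) with hρdef
        have hρsq : ρ^2 = ∑ i, (h * β i)^2 := Real.sq_sqrt (Finset.sum_nonneg fun i _ => sq_nonneg _)
        have hMle : ∀ i, ((β i : ℝ))^2 ≤ ((Mf β : ℝ))^2 := by
          intro i
          have h1 : (β i).natAbs ≤ Mf β := Finset.le_sup (f := fun i => (β i).natAbs) (Finset.mem_univ i)
          have h2 : ((β i : ℝ))^2 = (((β i).natAbs : ℝ))^2 := by
            rw [Nat.cast_natAbs, Int.cast_abs, sq_abs]
          rw [h2]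
          apply pow_le_pow_left₀ (by positivity)
          exact_mod_cast h1
        have hsumsq : ∑ i, ((β i : ℝ))^2 ≤ (N:ℝ) * ((Mf β : ℝ))^2 := by
          calc ∑ i, ((β i : ℝ))^2 ≤ ∑ _i : Fin N, ((Mf β : ℝ))^2 :=
                Finset.sum_le_sum fun i _ => hMle i
            _ = (N:ℝ) * ((Mf β : ℝ))^2 := by
                rw [Finset.sum_const, Finset.card_univ, Fintype.card_fin, nsmul_eq_mul]
        have hMlow : ((Mf β : ℝ))^2 ≤ ∑ i, ((β i : ℝ))^2 := by
          obtain ⟨i₁, _, hi₁⟩ := Finset.exists_mem_eq_sup Finset.univ huniv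
            (fun i => (β i).natAbs)
          have h1 : ((Mf β : ℝ))^2 = ((β i₁ : ℝ))^2 := by
            rw [hMfdef]
            simp only
            rw [hi₁, Nat.cast_natAbs, Int.cast_abs, sq_abs]
          rw [h1]
          exact Finset.single_le_sum (fun i _ => sq_nonneg ((β i : ℝ))) (Finset.mem_univ i₁)
        have hsum_hb : ∑ i, (h * β i)^2 = h^2 * ∑ i, ((β i : ℝ))^2 := by
          rw [Finset.mul_sum]
          exact Finset.sum_congr rfl fun i _ => by ring
        have hρ_ge : h * (Mf β : ℝ) ≤ ρ := by
          rw [hρdef]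
          rw [Real.le_sqrt (by positivity) (Finset.sum_nonneg fun i _ => sq_nonneg _)]
          rw [hsum_hb, mul_pow]
          exact mul_le_mul_of_nonneg_left hMlow (sq_nonneg h)
        have hρpos : 0 < ρ := lt_of_lt_of_le (by positivity) hρ_ge
        have hcs : z^2 ≤ (N:ℝ)*t^2*((Mf β : ℝ))^2 := by
          have h1 : z^2 ≤ (∑ i, (ξ i)^2) * ∑ i, (h * β i)^2 :=
            Finset.sum_mul_sq_le_sq_mul_sq Finset.univ ξ (fun i => h * β i)
          have h2 : ∑ i, (ξ i)^2 = r^2 := (Real.sq_sqrt (Finset.sum_nonneg fun i _ => sq_nonneg _)).symm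
          have h3 : (∑ i, (ξ i)^2) * ∑ i, (h * β i)^2 ≤ r^2 * (h^2 * ((N:ℝ) * ((Mf β : ℝ))^2)) := by
            rw [h2, hsum_hb]
            apply mul_le_mul_of_nonneg_left _ (sq_nonneg r)
            exact mul_le_mul_of_nonneg_left hsumsq (sq_nonneg h)
          have h4 : r^2 * (h^2 * ((N:ℝ) * ((Mf β : ℝ))^2)) = (N:ℝ)*t^2*((Mf β : ℝ))^2 := by
            rw [htdef]; ring
          linarith
        have hcos : 1 - Real.cos z ≤ min ((N:ℝ)*t^2*((Mf β : ℝ))^2/2) 2 := by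
          apply le_min
          · have := Real.one_sub_sq_div_two_le_cos (x := z)
            linarith
          · linarith [Real.neg_one_le_cos z]
        have hωb : ω β ≤ C * h ^ N * ρ ^ (-(N:ℝ) - 2*s) := hbound β hβ
        have hρb : ρ ^ (-(N:ℝ) - 2*s) ≤ (h * (Mf β : ℝ)) ^ (-(N:ℝ) - 2*s) := by
          apply Real.rpow_le_rpow_of_nonpos (by positivity) hρ_ge
          linarith
        have hmulpow : (h * (Mf β : ℝ)) ^ (-(N:ℝ) - 2*s)
            = h ^ (-(N:ℝ) - 2*s) * (Mf β : ℝ) ^ (-(N:ℝ) - 2*s) :=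
          Real.mul_rpow hh.le (by positivity)
        have hhpow : C * h ^ N * (h ^ (-(N:ℝ) - 2*s) * (Mf β : ℝ) ^ (-(N:ℝ) - 2*s))
            = C * h ^ (-(2*s)) * (Mf β : ℝ) ^ (-(N:ℝ) - 2*s) := by
          rw [← Real.rpow_natCast h N]
          rw [show C * h ^ ((N:ℕ):ℝ) * (h ^ (-(N:ℝ) - 2*s) * (Mf β : ℝ) ^ (-(N:ℝ) - 2*s))
            = C * (h ^ ((N:ℕ):ℝ) * h ^ (-(N:ℝ) - 2*s)) * (Mf β : ℝ) ^ (-(N:ℝ) - 2*s) by ring]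
          rw [← Real.rpow_add hh]
          congr 2
          push_cast
          ring
        calc F β = ω β * (1 - Real.cos z) := rfl
          _ ≤ (C * h ^ N * ρ ^ (-(N:ℝ) - 2*s)) * min ((N:ℝ)*t^2*((Mf β : ℝ))^2/2) 2 := by
              apply mul_le_mul hωb hcos _ (by positivity)
              linarith [Real.cos_le_one z]
          _ ≤ (C * h ^ N * (h * (Mf β : ℝ)) ^ (-(N:ℝ) - 2*s)) * min ((N:ℝ)*t^2*((Mf β : ℝ))^2/2) 2 := by
              apply mul_le_mul_of_nonneg_right _ (hminnn _)
              exact mul_le_mul_of_nonneg_left hρb (by positivity)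
          _ = (C * h ^ (-(2*s))) * g (Mf β) := by
              rw [hmulpow, hhpow, hgdef]
              ring
    -- counting boxes
    have hb0' : b 0 = 0 := by
      have h2s : (0:ℝ) < 1 + 2*s := by linarith
      simp only [hbdef, Nat.cast_zero]
      rw [Real.zero_rpow (neg_ne_zero.mpr h2s.ne')]
      ring
    have hpowg : ∀ m : ℕ, 1 ≤ m → (m:ℝ)^(N-1) * g m = b m := by
      intro m hm
      have hmpos : (0:ℝ) < (m:ℝ) := by exact_mod_cast hm
      simp only [hgdef, hbdef]
      rw [← mul_assoc, ← Real.rpow_natCast (m:ℝ) (N-1), ← Real.rpow_add hmpos]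
      congr 2
      have : ((N-1:ℕ):ℝ) = (N:ℝ) - 1 := by
        rw [Nat.cast_sub hN]
        norm_num
      rw [this]
      ring
    set box : ℕ → Finset (Fin N → ℤ) := fun m => Fintype.piFinset fun _ => Finset.Icc (-(m:ℤ)) (m:ℤ)
      with hboxdef
    have hmem : ∀ m β, β ∈ box m ↔ Mf β ≤ m := by
      intro m β
      rw [hboxdef]
      simp only [Fintype.mem_piFinset, Finset.mem_Icc]
      rw [hMfdef]
      simp only [Finset.sup_le_iff, Finset.mem_univ, forall_true_left]
      apply forall_congr'
      intro i
      omega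
    have hboxcard : ∀ m, (box m).card = (2*m+1)^N := by
      intro m
      rw [hboxdef]
      simp only
      rw [Fintype.card_piFinset]
      have h1 : (Finset.Icc (-(m:ℤ)) (m:ℤ)).card = 2*m+1 := by
        rw [Int.card_Icc]
        omega
      simp [h1]
    have hboxmono : ∀ {m₁ m₂ : ℕ}, m₁ ≤ m₂ → box m₁ ⊆ box m₂ := by
      intro m₁ m₂ h12 β hβ
      exact (hmem _ β).2 (le_trans ((hmem _ β).1 hβ) h12)
    have hcard_le : ∀ (m KK : ℕ), 1 ≤ m →
        ((((box KK).filter (fun β => Mf β = m)).card : ℝ)) ≤ D * (m:ℝ)^(N-1) := by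
      intro m KK hm
      have hmR : (1:ℝ) ≤ (m:ℝ) := by exact_mod_cast hm
      have hsub : (box KK).filter (fun β => Mf β = m) ⊆ box m \ box (m-1) := by
        intro β hβ
        rw [Finset.mem_filter] at hβ
        rw [Finset.mem_sdiff, hmem, hmem]
        omega
      have h1 : ((box KK).filter (fun β => Mf β = m)).card ≤ (2*m+1)^N - (2*(m-1)+1)^N := by
        refine le_trans (Finset.card_le_card hsub) ?_
        rw [Finset.card_sdiff_of_subset (hboxmono (Nat.sub_le m 1)), hboxcard, hboxcard]
      have hple : (2*(m-1)+1)^N ≤ (2*m+1)^N := Nat.pow_le_pow_left (by omega) N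
      have h2 : ((((box KK).filter (fun β => Mf β = m)).card : ℝ))
          ≤ (2*(m:ℝ)+1)^N - (2*(m:ℝ)-1)^N := by
        have := (Nat.cast_le (α := ℝ)).2 h1
        rw [Nat.cast_sub hple] at this
        push_cast [Nat.cast_sub hm] at this
        rw [show (2*(m:ℝ)-1) = 2*((m:ℝ)-1)+1 by ring]; exact this
      have h3 : (2*(m:ℝ)+1)^N - (2*(m:ℝ)-1)^N ≤ (N:ℝ) * (2*(m:ℝ)+1)^(N-1) * 2 := by
        have := aux_pow_sub (N-1) (a := 2*(m:ℝ)+1) (b := 2*(m:ℝ)-1)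
          (by linarith) (by linarith)
        have hN1 : N - 1 + 1 = N := by omega
        rw [hN1] at this
        have hcast : ((N-1:ℕ):ℝ) + 1 = (N:ℝ) := by
          rw [Nat.cast_sub hN]
          norm_num
        rw [hcast] at this
        calc (2*(m:ℝ)+1)^N - (2*(m:ℝ)-1)^N ≤ (N:ℝ) * (2*(m:ℝ)+1)^(N-1) * (2*(m:ℝ)+1 - (2*(m:ℝ)-1)) := this
          _ = (N:ℝ) * (2*(m:ℝ)+1)^(N-1) * 2 := by ring
      have h4 : (2*(m:ℝ)+1)^(N-1) ≤ 3^(N-1) * (m:ℝ)^(N-1) := by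
        rw [← mul_pow]
        exact pow_le_pow_left₀ (by linarith) (by linarith) _
      calc ((((box KK).filter (fun β => Mf β = m)).card : ℝ))
          ≤ (2*(m:ℝ)+1)^N - (2*(m:ℝ)-1)^N := h2
        _ ≤ (N:ℝ) * (2*(m:ℝ)+1)^(N-1) * 2 := h3
        _ ≤ (N:ℝ) * (3^(N-1) * (m:ℝ)^(N-1)) * 2 := by
            apply mul_le_mul_of_nonneg_right _ (by norm_num)
            exact mul_le_mul_of_nonneg_left h4 (by positivity)
        _ = D * (m:ℝ)^(N-1) := by rw [hDdef]; ring
    -- main finite-sum bound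
    have hmain : ∀ A : Finset (Fin N → ℤ),
        ∑ β ∈ A, F β ≤ (C * h ^ (-(2*s))) * (D * (K2 * t^(2*s))) := by
      intro A
      set KK := A.sup Mf with hKKdef
      have hAsub : A ⊆ box KK := fun β hβA => (hmem KK β).2 (Finset.le_sup (f := Mf) hβA)
      have hfib : ∑ β ∈ box KK, g (Mf β)
          = ∑ m ∈ Finset.range (KK+1), ∑ β ∈ (box KK).filter (fun β => Mf β = m), g (Mf β) :=
        (Finset.sum_fiberwise_of_maps_to
          (fun β hβ => Finset.mem_range.mpr (Nat.lt_succ_of_le ((hmem KK β).1 hβ))) _).symm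
      have hinner : ∀ m, ∑ β ∈ (box KK).filter (fun β => Mf β = m), g (Mf β)
          = (((box KK).filter (fun β => Mf β = m)).card : ℝ) * g m := by
        intro m
        rw [Finset.sum_congr rfl (fun β hβ => by rw [(Finset.mem_filter.mp hβ).2])]
        rw [Finset.sum_const, nsmul_eq_mul]
      have hperm : ∀ m ∈ Finset.range (KK+1),
          (((box KK).filter (fun β => Mf β = m)).card : ℝ) * g m ≤ D * b m := by
        intro m _
        rcases Nat.eq_zero_or_pos m with hm0 | hm1
        · subst hm0
          rw [hg0, hb0']
          simp
        · calc (((box KK).filter (fun β => Mf β = m)).card : ℝ) * g m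
              ≤ (D * (m:ℝ)^(N-1)) * g m :=
                mul_le_mul_of_nonneg_right (hcard_le m KK hm1) (hgnn m)
            _ = D * ((m:ℝ)^(N-1) * g m) := by ring
            _ = D * b m := by rw [hpowg m hm1]
      have hgsum : ∑ β ∈ box KK, g (Mf β) ≤ D * (K2 * t^(2*s)) := by
        calc ∑ β ∈ box KK, g (Mf β)
            = ∑ m ∈ Finset.range (KK+1), (((box KK).filter (fun β => Mf β = m)).card : ℝ) * g m := by
              rw [hfib]
              exact Finset.sum_congr rfl fun m _ => hinner m
          _ ≤ ∑ m ∈ Finset.range (KK+1), D * b m := Finset.sum_le_sum hperm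
          _ = D * ∑ m ∈ Finset.range (KK+1), b m := by rw [Finset.mul_sum]
          _ ≤ D * ∑' m, b m := by
              apply mul_le_mul_of_nonneg_left _ hDpos.le
              exact Summable.sum_le_tsum _ (fun m _ => hbnn m) hsb
          _ ≤ D * (K2 * t^(2*s)) := by
              apply mul_le_mul_of_nonneg_left _ hDpos.le
              exact honeD
      calc ∑ β ∈ A, F β ≤ ∑ β ∈ box KK, F β :=
            Finset.sum_le_sum_of_subset_of_nonneg hAsub (fun β _ _ => hFnn β)
        _ ≤ ∑ β ∈ box KK, (C * h ^ (-(2*s))) * g (Mf β) := Finset.sum_le_sum fun β _ => hpoint β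
        _ = (C * h ^ (-(2*s))) * ∑ β ∈ box KK, g (Mf β) := by rw [Finset.mul_sum]
        _ ≤ (C * h ^ (-(2*s))) * (D * (K2 * t^(2*s))) := by
            apply mul_le_mul_of_nonneg_left hgsum (by positivity)
    have htsum : ∑' β, F β ≤ (C * h ^ (-(2*s))) * (D * (K2 * t^(2*s))) :=
      Summable.tsum_le_of_sum_le hFsum hmain
    have hconv : (C * h ^ (-(2*s))) * (D * (K2 * t^(2*s))) = (C * D * K2) * r^(2*s) := by
      have h1 : t ^ (2*s) = r^(2*s) * h^(2*s) := by
        rw [htdef]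
        exact Real.mul_rpow hrnn hh.le
      have hne : (0:ℝ) < h^(2*s) := Real.rpow_pos_of_pos hh _
      rw [h1, Real.rpow_neg hh.le]
      field_simp
    have hfinal : ∑' β, F β ≤ (C * D * K2) * r^(2*s) := by rw [← hconv]; exact htsum
    rw [neg_mul]
    exact neg_le_neg hfinal
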